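/- Let (ā, b) be an independent tuple in a Steiner quasigroup and let t(x̄, y) be a term with exactly one occurrence of y. Then the endomorphism of ⟨ā, b⟩ induced by ā ↦ ā and b ↦ t(ā, b) is an automorphism of ⟨ā, b⟩. -/
import Mathlib


/-- A Steiner quasigroup: a commutative, idempotent binary structure
with `x * (x * y) = y`. -/
class Steiner (M : Type) extends Mul M where
  comm : ∀ x y : M, x * y = y * x
  idem : ∀ x : M, x * x = x
  lcancel : ∀ x y : M, x * (x * y) = y

namespace Steiner

variable {M : Type} [Steiner M]

/-- Membership in the subquasigroup generated by `A`. -/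
inductive mem_closure (A : Set M) : M → Prop
  | base {a : M} : a ∈ A → mem_closure A a
  | mul {a b : M} : mem_closure A a → mem_closure A b → mem_closure A (a * b)

/-- The subquasigroup generated by `A`. -/
def closure (A : Set M) : Set M := {x | mem_closure A x}

instance (A : Set M) : Steiner (closure A) where
  mul a b := ⟨a.1 * b.1, a.2.mul b.2⟩
  comm a b := Subtype.ext (Steiner.comm a.1 b.1)
  idem a := Subtype.ext (Steiner.idem a.1)
  lcancel a b := Subtype.ext (Steiner.lcancel a.1 b.1)

/-- `A` is independent: the generated subquasigroup has the universal mapping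
property over `A` with respect to the class of Steiner quasigroups. -/
def Independent (A : Set M) : Prop :=
  ∀ (N : Type) [Steiner N] (f : A → N),
    ∃ g : closure A →ₙ* N, ∀ a : A, g ⟨a.1, mem_closure.base a.2⟩ = f a

/-- A tuple is independent if its entries are pairwise distinct and its
range is an independent set. -/
def IndepTuple {ι : Type} (a : ι → M) : Prop :=
  Function.Injective a ∧ Independent (Set.range a)

/-- `A` is a free base of `M`: it generates `M` and `M` has the universal
mapping property over `A`. -/
def FreeBase (A : Set M) : Prop :=
  closure A = Set.univ ∧
  ∀ (N : Type) [Steiner N] (f : A → N),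
    ∃ g : M →ₙ* N, ∀ a : A, g a.1 = f a

/-- Terms in the language with one binary operation. -/
inductive Term (α : Type) where
  | var : α → Term α
  | mul : Term α → Term α → Term α

/-- Evaluation of a term at an assignment. -/
def Term.eval {α : Type} (e : α → M) : Term α → M
  | .var x => e x
  | .mul t s => t.eval e * s.eval e

/-- Equivalence of terms generated by applications of commutativity to subterms. -/
inductive TEquiv {α : Type} : Term α → Term α → Prop
  | refl (t : Term α) : TEquiv t t
  | symm {t s : Term α} : TEquiv t s → TEquiv s t
  | trans {t s u : Term α} : TEquiv t s → TEquiv s u → TEquiv t u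
  | comm (t s : Term α) : TEquiv (.mul t s) (.mul s t)
  | congr {t t' s s' : Term α} : TEquiv t t' → TEquiv s s' →
      TEquiv (.mul t s) (.mul t' s')

/-- The subterm relation. -/
inductive Subterm {α : Type} : Term α → Term α → Prop
  | refl (t : Term α) : Subterm t t
  | left {s t r : Term α} : Subterm s t → Subterm s (.mul t r)
  | right {s t r : Term α} : Subterm s t → Subterm s (.mul r t)

/-- A term is reduced if it contains no subterm of the forms `t₁·t₂` with
`t₁ ∼ t₂`, `t₁·(t₂·t₃)` with `t₁ ∼ t₂` or `t₁ ∼ t₃`, or `(t₁·t₂)·t₃` with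
`t₁ ∼ t₃` or `t₂ ∼ t₃`. -/
def Reduced {α : Type} (t : Term α) : Prop :=
  (∀ t1 t2 : Term α, Subterm (.mul t1 t2) t → ¬ TEquiv t1 t2) ∧
  (∀ t1 t2 t3 : Term α, Subterm (.mul t1 (.mul t2 t3)) t →
      ¬ TEquiv t1 t2 ∧ ¬ TEquiv t1 t3) ∧
  (∀ t1 t2 t3 : Term α, Subterm (.mul (.mul t1 t2) t3) t →
      ¬ TEquiv t1 t3 ∧ ¬ TEquiv t2 t3)

/-- The rank of a term. -/
def Term.rank {α : Type} : Term α → ℕ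
  | .var _ => 0
  | .mul t s => max t.rank s.rank + 1

/-- Number of occurrences of a variable in a term. -/
def Term.occ {α : Type} [DecidableEq α] (x : α) : Term α → ℕ
  | .var y => if y = x then 1 else 0
  | .mul t s => t.occ x + s.occ x

/-- The variable `x` occurs in the term. -/
inductive Occurs {α : Type} (x : α) : Term α → Prop
  | var : Occurs x (.var x)
  | left {t s : Term α} : Occurs x t → Occurs x (.mul t s)
  | right {t s : Term α} : Occurs x s → Occurs x (.mul t s)

/-- The levels of `M` over `A`. -/
def level (A : Set M) : ℕ → Set M
  | 0 => A
  | n + 1 => {z | ∃ a ∈ level A n, ∃ b ∈ level A n, z = a * b}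

/-- `S` is a standard free construction over `A`. -/
def StdFree (A : Set M) (S : ℕ → Set M) : Prop :=
  S 0 = A ∧
  (∀ n, S (n + 1) = {z | ∃ a ∈ S n, ∃ b ∈ S n, z = a * b}) ∧
  (∀ a ∈ S 0, ∀ b ∈ S 0, a ≠ b → a * b ∉ S 0) ∧
  (∀ n, ∀ a ∈ S (n + 1), a ∉ S n → ∀ b ∈ S (n + 1), b ∉ S n → a ≠ b →
    a * b ∉ S (n + 1)) ∧
  (∀ n, ∀ a ∈ S (n + 1), a ∉ S n → ∃ b ∈ S n, ∃ c ∈ S n, b ≠ c ∧ a = b * c ∧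
    ∀ b' ∈ S n, ∀ c' ∈ S n, b' ≠ c' → a = b' * c' → ({b', c'} : Set M) = {b, c})

theorem eval_mem_closure {α : Type} {A : Set M} (e : α → M) (h : ∀ x, e x ∈ A) :
    ∀ t : Term α, t.eval e ∈ closure A
  | .var x => mem_closure.base (h x)
  | .mul t s => mem_closure.mul (eval_mem_closure e h t) (eval_mem_closure e h s)

end Steiner

open Steiner
namespace SteinerAux

open Steiner

variable {M : Type} [Steiner M]

lemma rcancel2 (a z : M) : (a * z) * a = z := by
  rw [Steiner.comm, Steiner.lcancel]

lemma midcancel (a x : M) : a * (x * a) = x := by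
  rw [Steiner.comm x a, Steiner.lcancel]

/-- Evaluation only depends on the `some`-part when `none` does not occur. -/
lemma eval_congr_some {ι : Type} [DecidableEq ι] {N : Type} [Steiner N]
    {u v : Option ι → N} (h : ∀ i, u (some i) = v (some i)) :
    ∀ t : Term (Option ι), t.occ none = 0 → t.eval u = t.eval v := by
  intro t
  induction t with
  | var y =>
    intro h0
    cases y with
    | none => simp [Term.occ] at h0
    | some i => exact h i
  | mul t1 t2 ih1 ih2 =>
    intro h0
    simp only [Term.occ, Nat.add_eq_zero] at h0
    simp only [Term.eval, ih1 h0.1, ih2 h0.2]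

lemma occ_mul_one {ι : Type} [DecidableEq ι] {t1 t2 : Term (Option ι)}
    (h : (Term.mul t1 t2).occ none = 1) :
    (t1.occ none = 1 ∧ t2.occ none = 0) ∨ (t1.occ none = 0 ∧ t2.occ none = 1) := by
  simp only [Term.occ] at h
  omega

/-- Inverse evaluation: solves `t(x̄, y) = z` for `y`. -/
def invE {ι : Type} [DecidableEq ι] {N : Type} [Steiner N] (u : Option ι → N) :
    Term (Option ι) → N → N
  | .var _, z => z
  | .mul t1 t2, z =>
      if t1.occ none = 1 then invE u t1 (t2.eval u * z)
      else invE u t2 (t1.eval u * z)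

/-- Replace the `none`-value of an assignment. -/
def setN {ι : Type} {N : Type} (u : Option ι → N) (y : N) : Option ι → N :=
  fun x => Option.elim x y (fun i => u (some i))

lemma invE_congr {ι : Type} [DecidableEq ι] {N : Type} [Steiner N]
    {u v : Option ι → N} (h : ∀ i, u (some i) = v (some i)) :
    ∀ t : Term (Option ι), t.occ none = 1 → ∀ z, invE u t z = invE v t z := by
  intro t
  induction t with
  | var y => intro _ z; rfl
  | mul t1 t2 ih1 ih2 =>
    intro h1 z
    rcases occ_mul_one h1 with ⟨c1, c2⟩ | ⟨c1, c2⟩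
    · simp only [invE, c1, if_pos, eval_congr_some h t2 c2, ih1 c1]
    · have : ¬ t1.occ none = 1 := by omega
      simp only [invE, this, if_neg, if_false, eval_congr_some h t1 c1, ih2 c2]

lemma invE_L1 {ι : Type} [DecidableEq ι] {N : Type} [Steiner N] :
    ∀ t : Term (Option ι), t.occ none = 1 → ∀ (u : Option ι → N) (z : N),
      Term.eval (setN u (invE u t z)) t = z := by
  intro t
  induction t with
  | var y =>
    intro h1 u z
    cases y with
    | none => rfl
    | some i => simp [Term.occ] at h1
  | mul t1 t2 ih1 ih2 =>
    intro h1 u z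
    rcases occ_mul_one h1 with ⟨c1, c2⟩ | ⟨c1, c2⟩
    · have hi : invE u (Term.mul t1 t2) z = invE u t1 (t2.eval u * z) := by
        simp [invE, c1]
      rw [hi]
      show Term.eval _ t1 * Term.eval _ t2 = z
      rw [eval_congr_some (u := setN u (invE u t1 (t2.eval u * z))) (v := u)
        (fun i => rfl) t2 c2, ih1 c1, rcancel2]
    · have hne : ¬ t1.occ none = 1 := by omega
      have hi : invE u (Term.mul t1 t2) z = invE u t2 (t1.eval u * z) := by
        simp [invE, hne]
      rw [hi]
      show Term.eval _ t1 * Term.eval _ t2 = z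
      rw [eval_congr_some (u := setN u (invE u t2 (t1.eval u * z))) (v := u)
        (fun i => rfl) t1 c1, ih2 c2, Steiner.lcancel]

lemma invE_L2 {ι : Type} [DecidableEq ι] {N : Type} [Steiner N] :
    ∀ t : Term (Option ι), t.occ none = 1 → ∀ u : Option ι → N,
      invE u t (t.eval u) = u none := by
  intro t
  induction t with
  | var y =>
    intro h1 u
    cases y with
    | none => rfl
    | some i => simp [Term.occ] at h1
  | mul t1 t2 ih1 ih2 =>
    intro h1 u
    rcases occ_mul_one h1 with ⟨c1, c2⟩ | ⟨c1, c2⟩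
    · have hi : invE u (Term.mul t1 t2) ((Term.mul t1 t2).eval u)
          = invE u t1 (t2.eval u * (t1.eval u * t2.eval u)) := by
        simp [invE, c1, Term.eval]
      rw [hi, midcancel, ih1 c1]
    · have hne : ¬ t1.occ none = 1 := by omega
      have hi : invE u (Term.mul t1 t2) ((Term.mul t1 t2).eval u)
          = invE u t2 (t1.eval u * (t1.eval u * t2.eval u)) := by
        simp [invE, hne, Term.eval]
      rw [hi, Steiner.lcancel, ih2 c2]

lemma hom_eval {N P : Type} [Steiner N] [Steiner P] (g : N →ₙ* P) {α : Type}
    (u : α → N) : ∀ t : Term α, g (t.eval u) = t.eval (fun x => g (u x)) := by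
  intro t
  induction t with
  | var y => rfl
  | mul t1 t2 ih1 ih2 => simp only [Term.eval, map_mul, ih1, ih2]

lemma hom_invE {ι : Type} [DecidableEq ι] {N P : Type} [Steiner N] [Steiner P]
    (g : N →ₙ* P) (u : Option ι → N) :
    ∀ (t : Term (Option ι)) (z : N),
      g (invE u t z) = invE (fun x => g (u x)) t (g z) := by
  intro t
  induction t with
  | var y => intro z; rfl
  | mul t1 t2 ih1 ih2 =>
    intro z
    by_cases c : t1.occ none = 1
    · simp only [invE, c, if_pos, ih1, map_mul, hom_eval]
    · simp only [invE, c, if_neg, if_false, ih2, map_mul, hom_eval]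

/-- The coercion from a closure to the ambient quasigroup, as a hom. -/
def valHom (A : Set M) : closure A →ₙ* M where
  toFun := Subtype.val
  map_mul' := fun _ _ => rfl

lemma hom_ext {A : Set M} {N : Type} [Steiner N] (h1 h2 : closure A →ₙ* N)
    (H : ∀ x (hx : x ∈ A), h1 ⟨x, mem_closure.base hx⟩ = h2 ⟨x, mem_closure.base hx⟩) :
    ∀ z : closure A, h1 z = h2 z := by
  rintro ⟨z, hz⟩
  induction hz with
  | base h => exact H _ h
  | @mul a b ha hb iha ihb =>
    have h : (⟨a * b, ha.mul hb⟩ : closure A) = (⟨a, ha⟩ : closure A) * ⟨b, hb⟩ := rfl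
    rw [h, map_mul, map_mul, iha, ihb]

end SteinerAux

open SteinerAux

/-- For an independent tuple `e = (ā, b)` (with `b = e none`) and a term `t`
with exactly one occurrence of `y = none`, the endomorphism of `⟨ā, b⟩`
induced by `ā ↦ ā`, `b ↦ t(ā, b)` is an automorphism. -/
theorem stmt18 {M : Type} [Steiner M] {ι : Type} [DecidableEq ι]
    (e : Option ι → M) (he : IndepTuple e)
    (t : Term (Option ι)) (ht : t.occ none = 1)
    (f : closure (Set.range e) →ₙ* closure (Set.range e))
    (hfa : ∀ i : ι, f ⟨e (some i), mem_closure.base ⟨some i, rfl⟩⟩ =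
      ⟨e (some i), mem_closure.base ⟨some i, rfl⟩⟩)
    (hfb : f ⟨e none, mem_closure.base ⟨none, rfl⟩⟩ =
      ⟨t.eval e, eval_mem_closure e (fun x => Set.mem_range_self x) t⟩) :
    Function.Bijective f := by
  classical
  let ebar : Option ι → closure (Set.range e) := fun x => ⟨e x, mem_closure.base ⟨x, rfl⟩⟩
  let c : closure (Set.range e) := invE ebar t (ebar none)
  obtain ⟨g, hg⟩ := he.2 (closure (Set.range e))
    (fun a => if a.1 = e none then c else ⟨a.1, mem_closure.base a.2⟩)
  have hgsome : ∀ i, g (ebar (some i)) = ebar (some i) := by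
    intro i
    have h := hg ⟨e (some i), ⟨some i, rfl⟩⟩
    rw [if_neg (fun hcon => Option.some_ne_none i (he.1 hcon))] at h
    exact h
  have hgnone : g (ebar none) = c := by
    have h := hg ⟨e none, ⟨none, rfl⟩⟩
    rw [if_pos rfl] at h
    exact h
  have hfsome : ∀ i, f (ebar (some i)) = ebar (some i) := hfa
  -- f (ebar none) = Term.eval ebar t
  have hval : (Term.eval ebar t).1 = t.eval e := by
    have := hom_eval (valHom (Set.range e)) ebar t
    exact this
  have hfb' : f (ebar none) = Term.eval ebar t := by
    refine Subtype.ext ?_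
    rw [show f (ebar none) =
      (⟨t.eval e, eval_mem_closure e (fun x => Set.mem_range_self x) t⟩ : closure (Set.range e))
      from hfb]
    exact hval.symm
  -- g ∘ f = id
  have key1 : ∀ z : closure (Set.range e), g (f z) = z := by
    have H : ∀ x (hx : x ∈ Set.range e), (g.comp f) ⟨x, mem_closure.base hx⟩ =
        (MulHom.id (closure (Set.range e))) ⟨x, mem_closure.base hx⟩ := by
      intro x hx
      obtain ⟨j, hj⟩ := hx
      subst hj
      cases j with
      | some i =>
        show g (f (ebar (some i))) = ebar (some i)
        rw [hfsome, hgsome]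
      | none =>
        show g (f (ebar none)) = ebar none
        rw [hfb', hom_eval g ebar t]
        have hfun : (fun x => g (ebar x)) = setN ebar c := by
          funext x
          cases x with
          | none => exact hgnone
          | some i => exact hgsome i
        rw [hfun]
        exact invE_L1 t ht ebar (ebar none)
    intro z
    exact hom_ext (g.comp f) (MulHom.id (closure (Set.range e))) H z
  -- f ∘ g = id
  have key2 : ∀ z : closure (Set.range e), f (g z) = z := by
    have H : ∀ x (hx : x ∈ Set.range e), (f.comp g) ⟨x, mem_closure.base hx⟩ =
        (MulHom.id (closure (Set.range e))) ⟨x, mem_closure.base hx⟩ := by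
      intro x hx
      obtain ⟨j, hj⟩ := hx
      subst hj
      cases j with
      | some i =>
        show f (g (ebar (some i))) = ebar (some i)
        rw [hgsome, hfsome]
      | none =>
        show f (g (ebar none)) = ebar none
        rw [hgnone]
        show f (invE ebar t (ebar none)) = ebar none
        rw [hom_invE f ebar t (ebar none), hfb',
          invE_congr (u := fun x => f (ebar x)) (v := ebar) hfsome t ht]
        exact invE_L2 t ht ebar
    intro z
    exact hom_ext (f.comp g) (MulHom.id (closure (Set.range e))) H z
  exact ⟨Function.LeftInverse.injective key1, Function.RightInverse.surjective key2⟩
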